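/- Let n > 2 be even and let A be the matrix of rotation symmetric Boolean functions on F_2^n. Then Tr(A) = (1/n) * 2^(n/2) * sum over divisors d of n such that n/d is even of phi(n/d) * 2^d. In particular, Tr(A) > 0. -/

import Mathlib

open Finset
open Fin.NatCast Fin.CommRing

/-- Cyclic shift on `F_2^n`: `(shift x) i = x (i+1)`. -/
def shift (n : ℕ) (x : Fin n → ZMod 2) : Fin n → ZMod 2 := fun i => x (finRotate n i)

/-- Dot product on `F_2^n`. -/
def dot (n : ℕ) (x y : Fin n → ZMod 2) : ZMod 2 := ∑ i, x i * y i

/-- `(-1)^b` as an integer. -/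
def sgn (b : ZMod 2) : ℤ := if b = 0 then 1 else -1

/-- The orbit of `x` under cyclic shifts. -/
def orbit (n : ℕ) (x : Fin n → ZMod 2) : Finset (Fin n → ZMod 2) :=
  Finset.image (fun k : Fin n => (shift n)^[(k : ℕ)] x) Finset.univ

/-- The set of orbits of the cyclic shift action on `F_2^n`. -/
def orbits (n : ℕ) : Finset (Finset (Fin n → ZMod 2)) :=
  Finset.image (orbit n) Finset.univ

/-- `g_n`, the number of orbits. -/
def numOrbits (n : ℕ) : ℕ := (orbits n).card

/-- Encoding of a vector as a natural number, first coordinate most significant,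
so the lexicographic order on vectors is the order of `vecToNat`. -/
def vecToNat (n : ℕ) (x : Fin n → ZMod 2) : ℕ := ∑ i : Fin n, (x i).val * 2 ^ (n - 1 - (i : ℕ))

/-- The lexicographically least element of an orbit. -/
noncomputable def lam (n : ℕ) (O : Finset (Fin n → ZMod 2)) : Fin n → ZMod 2 :=
  if h : ∃ x ∈ O, ∀ y ∈ O, vecToNat n x ≤ vecToNat n y then h.choose else 0

/-- The matrix `ₙ𝒜` of rotation symmetric Boolean functions. -/
noncomputable def rsbfMatrix (n : ℕ) :
    Matrix {O // O ∈ orbits n} {O // O ∈ orbits n} ℤ :=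
  fun i j => ∑ x ∈ i.1, sgn (dot n x (lam n j.1))

lemma sgn_add (a b : ZMod 2) : sgn (a + b) = sgn a * sgn b := by revert a b; decide

lemma sgn_sum {α : Type*} (s : Finset α) (f : α → ZMod 2) :
    sgn (∑ i ∈ s, f i) = ∏ i ∈ s, sgn (f i) := by
  classical
  induction s using Finset.cons_induction with
  | empty => simp [sgn]
  | cons a s ha ih => rw [Finset.sum_cons, Finset.prod_cons, sgn_add, ih]

lemma shift_apply (N : ℕ) (x : Fin (N+1) → ZMod 2) (i : Fin (N+1)) :
    shift (N+1) x i = x (i + 1) := by simp [shift, finRotate_succ_apply]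

lemma shift_iterate (N : ℕ) (k : ℕ) (x : Fin (N+1) → ZMod 2) (i : Fin (N+1)) :
    (shift (N+1))^[k] x i = x (i + (k : Fin (N+1))) := by
  induction k generalizing x i with
  | zero => simp
  | succ k ih =>
      rw [Function.iterate_succ_apply, ih, shift_apply]
      congr 1
      push_cast
      ring

lemma shift_iterate_n (N : ℕ) (x : Fin (N+1) → ZMod 2) :
    (shift (N+1))^[N+1] x = x := by
  funext i
  rw [shift_iterate]
  congr 1
  have : ((N+1 : ℕ) : Fin (N+1)) = 0 := by
    exact_mod_cast (ZMod.natCast_self (N+1) : ((N+1:ℕ) : ZMod (N+1)) = 0)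
  simp [this]

section A
variable (N : ℕ)
local notation "n" => N + 1
local notation "σ" => shift (N+1)

lemma isPeriodic (x : Fin n → ZMod 2) : Function.IsPeriodicPt σ n x := shift_iterate_n N x

lemma minper_pos (x : Fin n → ZMod 2) : 0 < Function.minimalPeriod σ x :=
  Function.IsPeriodicPt.minimalPeriod_pos (Nat.succ_pos N) (isPeriodic N x)

lemma minper_dvd (x : Fin n → ZMod 2) : Function.minimalPeriod σ x ∣ n :=
  (isPeriodic N x).minimalPeriod_dvd

lemma iterate_mod (x : Fin n → ZMod 2) (k : ℕ) :
    σ^[k] x = σ^[k % Function.minimalPeriod σ x] x :=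
  (Function.iterate_mod_minimalPeriod_eq).symm

lemma iterate_eq_iff (x : Fin n → ZMod 2) {j k : ℕ} (hj : j < Function.minimalPeriod σ x) :
    σ^[k] x = σ^[j] x ↔ k % Function.minimalPeriod σ x = j := by
  constructor
  · intro h
    rw [iterate_mod] at h
    exact Function.iterate_injOn_Iio_minimalPeriod
      (Nat.mod_lt _ (minper_pos N x)) hj h
  · intro h; rw [iterate_mod, h]

lemma mem_orbit_iff (x y : Fin n → ZMod 2) :
    y ∈ orbit n x ↔ ∃ k, σ^[k] x = y := by
  simp only [orbit, Finset.mem_image, Finset.mem_univ, true_and]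
  constructor
  · rintro ⟨k, rfl⟩; exact ⟨k, rfl⟩
  · rintro ⟨k, rfl⟩
    refine ⟨⟨k % n, Nat.mod_lt _ (Nat.succ_pos N)⟩, ?_⟩
    rw [iterate_mod, iterate_mod N x k]
    congr 1
    simp [Nat.mod_mod_of_dvd _ (minper_dvd N x)]

lemma mem_orbit_self (x : Fin n → ZMod 2) : x ∈ orbit n x :=
  (mem_orbit_iff N x x).2 ⟨0, rfl⟩

lemma orbit_eq_of_mem {x y : Fin n → ZMod 2} (h : y ∈ orbit n x) : orbit n y = orbit n x := by
  obtain ⟨a, rfl⟩ := (mem_orbit_iff N x y).1 h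
  ext z
  rw [mem_orbit_iff, mem_orbit_iff]
  constructor
  · rintro ⟨b, rfl⟩
    exact ⟨b + a, by rw [Function.iterate_add_apply]⟩
  · rintro ⟨b, rfl⟩
    have hq : ∀ q, σ^[(n) * q] x = x := by
      intro q
      induction q with
      | zero => simp
      | succ q ih =>
          rw [Nat.mul_succ, Function.iterate_add_apply, isPeriodic N x, ih]
    refine ⟨b + ((n) * (a + 1) - a), ?_⟩
    rw [← Function.iterate_add_apply]
    have ha : a ≤ (n) * (a + 1) := by
      have : a + 1 ≤ (n) * (a + 1) := Nat.le_mul_of_pos_left _ (Nat.succ_pos N)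
      omega
    have h2 : b + ((n) * (a + 1) - a) + a = b + (n) * (a + 1) := by omega
    rw [h2, Function.iterate_add_apply, hq]

lemma fiber_card {M p j : ℕ} (hp : 0 < p) (hdvd : p ∣ M) (hj : j < p) :
    ((Finset.range M).filter (fun k => k % p = j)).card = M / p := by
  rw [← Finset.card_range (M / p)]
  apply Finset.card_bij' (fun k _ => k / p) (fun t _ => j + p * t)
  · intro k hk
    simp only [Finset.mem_filter, Finset.mem_range] at hk ⊢
    rw [Nat.div_lt_iff_lt_mul hp]
    have := Nat.div_mul_cancel hdvd
    omega
  · intro t ht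
    simp only [Finset.mem_range] at ht
    simp only [Finset.mem_filter, Finset.mem_range]
    constructor
    · have h2 : p * (t+1) ≤ p * (M/p) := Nat.mul_le_mul_left p ht
      have h3 : p * (M/p) = M := Nat.mul_div_cancel' hdvd
      rw [Nat.mul_succ] at h2
      omega
    · simp [Nat.add_mul_mod_self_left, Nat.mod_eq_of_lt hj]
  · intro k hk
    simp only [Finset.mem_filter, Finset.mem_range] at hk
    rw [← hk.2]
    exact Nat.mod_add_div k p
  · intro t ht
    rw [Nat.add_mul_div_left _ _ hp, Nat.div_eq_of_lt hj, zero_add]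

lemma orbit_card (x : Fin n → ZMod 2) : (orbit n x).card = Function.minimalPeriod σ x := by
  set p := Function.minimalPeriod σ x with hp
  have h1 : orbit n x = Finset.image (fun k => σ^[k] x) (Finset.range p) := by
    ext z
    rw [mem_orbit_iff]
    simp only [Finset.mem_image, Finset.mem_range]
    constructor
    · rintro ⟨k, rfl⟩
      exact ⟨k % p, Nat.mod_lt _ (minper_pos N x), (iterate_mod N x k).symm⟩
    · rintro ⟨k, _, rfl⟩; exact ⟨k, rfl⟩
  rw [h1, Finset.card_image_of_injOn, Finset.card_range]
  intro a ha b hb hab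
  simp only [Finset.coe_range, Set.mem_Iio] at ha hb
  exact Function.iterate_injOn_Iio_minimalPeriod ha hb hab

lemma sum_iterate_eq (x : Fin n → ZMod 2) (g : (Fin n → ZMod 2) → ℤ) :
    ∑ k : Fin n, g (σ^[(k : ℕ)] x) =
      (n / Function.minimalPeriod σ x : ℕ) * ∑ y ∈ orbit n x, g y := by
  classical
  set p := Function.minimalPeriod σ x with hp
  rw [Fin.sum_univ_eq_sum_range (fun k => g (σ^[k] x)) n]
  rw [Finset.sum_comp g (fun k => σ^[k] x)]
  have himg : Finset.image (fun k => σ^[k] x) (Finset.range n) = orbit n x := by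
    ext z
    rw [mem_orbit_iff]
    simp only [Finset.mem_image, Finset.mem_range]
    constructor
    · rintro ⟨k, _, rfl⟩; exact ⟨k, rfl⟩
    · rintro ⟨k, rfl⟩
      exact ⟨k % n, Nat.mod_lt _ (Nat.succ_pos N), by
        rw [iterate_mod, iterate_mod N x k]
        congr 1
        simp [Nat.mod_mod_of_dvd _ (minper_dvd N x)]⟩
  rw [himg, Finset.mul_sum]
  apply Finset.sum_congr rfl
  intro b hb
  obtain ⟨k, rfl⟩ := (mem_orbit_iff N x b).1 hb
  have hcard : ((Finset.range n).filter (fun a => σ^[a] x = σ^[k] x)).card = n / p := by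
    have : ∀ a, (σ^[a] x = σ^[k] x) ↔ a % p = k % p := by
      intro a
      rw [iterate_mod N x k]
      exact iterate_eq_iff N x (Nat.mod_lt _ (minper_pos N x))
    rw [show (Finset.range n).filter (fun a => σ^[a] x = σ^[k] x)
        = (Finset.range n).filter (fun a => a % p = k % p) from Finset.filter_congr
        (fun a _ => by simp [this a])]
    exact fiber_card (minper_pos N x) (minper_dvd N x) (Nat.mod_lt _ (minper_pos N x))
  rw [hcard, nsmul_eq_mul]

end A

section B
variable (N : ℕ)
local notation "n" => N + 1
local notation "σ" => shift (N+1)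

noncomputable def F : (Fin n → ZMod 2) → ℤ :=
  fun y => ∑ k : Fin n, sgn (dot n (σ^[(k : ℕ)] y) y)

lemma exists_min (O : Finset (Fin n → ZMod 2)) (hO : O ∈ orbits n) :
    ∃ x ∈ O, ∀ y ∈ O, vecToNat n x ≤ vecToNat n y := by
  obtain ⟨x, -, rfl⟩ := Finset.mem_image.1 hO
  exact Finset.exists_min_image _ _ ⟨x, mem_orbit_self N x⟩

lemma lam_mem (O : Finset (Fin n → ZMod 2)) (hO : O ∈ orbits n) : lam n O ∈ O := by
  have h := exists_min N O hO
  rw [lam, dif_pos h]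
  exact h.choose_spec.1

lemma orbit_lam (O : Finset (Fin n → ZMod 2)) (hO : O ∈ orbits n) : orbit n (lam n O) = O := by
  obtain ⟨x, -, rfl⟩ := Finset.mem_image.1 hO
  exact orbit_eq_of_mem N (lam_mem N _ hO)

lemma dot_shift (a b : Fin n → ZMod 2) : dot n (σ a) (σ b) = dot n a b := by
  unfold dot
  simp only [shift_apply]
  exact Fintype.sum_equiv (Equiv.addRight (1 : Fin n)) _ _ (fun i => rfl)

lemma dot_shift_iterate (k : ℕ) (a b : Fin n → ZMod 2) :
    dot n (σ^[k] a) (σ^[k] b) = dot n a b := by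
  induction k with
  | zero => rfl
  | succ k ih => rw [Function.iterate_succ_apply', Function.iterate_succ_apply', dot_shift, ih]

lemma F_shift (y : Fin n → ZMod 2) : F N (σ y) = F N y := by
  unfold F
  apply Finset.sum_congr rfl
  intro k _
  have h1 : σ^[(k:ℕ)] (σ y) = σ (σ^[(k:ℕ)] y) := by
    rw [← Function.iterate_succ_apply, Function.iterate_succ_apply']
  rw [h1, dot_shift]

lemma F_iterate (j : ℕ) (y : Fin n → ZMod 2) : F N (σ^[j] y) = F N y := by
  induction j with
  | zero => rfl
  | succ j ih => rw [Function.iterate_succ_apply', F_shift, ih]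

lemma per_orbit (O : Finset (Fin n → ZMod 2)) (hO : O ∈ orbits n) :
    ∑ y ∈ O, F N y = (n : ℤ) * ∑ x ∈ O, sgn (dot n x (lam n O)) := by
  set Λ := lam n O with hΛdef
  have hOΛ : orbit n Λ = O := orbit_lam N O hO
  set p := Function.minimalPeriod σ Λ with hp
  set c := (n) / p with hc
  have hcpos : 0 < c := Nat.div_pos (Nat.le_of_dvd (Nat.succ_pos N) (minper_dvd N Λ))
    (minper_pos N Λ)
  have h1 : ∑ k : Fin n, sgn (dot n (σ^[(k:ℕ)] Λ) Λ) = (c:ℤ) * ∑ y ∈ O, sgn (dot n y Λ) := by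
    rw [← hOΛ]; exact sum_iterate_eq N Λ (fun y => sgn (dot n y Λ))
  have h2 : ∑ k : Fin n, F N (σ^[(k:ℕ)] Λ) = (c:ℤ) * ∑ y ∈ O, F N y := by
    rw [← hOΛ]; exact sum_iterate_eq N Λ (F N)
  have h3 : ∑ k : Fin n, F N (σ^[(k:ℕ)] Λ) = (n:ℤ) * F N Λ := by
    have e : ∑ k : Fin n, F N (σ^[(k:ℕ)] Λ) = ∑ _k : Fin n, F N Λ :=
      Finset.sum_congr rfl (fun k _ => F_iterate N (k:ℕ) Λ)
    rw [e, Finset.sum_const, Finset.card_univ, Fintype.card_fin, nsmul_eq_mul]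
    push_cast; ring
  have h4 : F N Λ = (c:ℤ) * ∑ y ∈ O, sgn (dot n y Λ) := h1
  have h5 : (c:ℤ) * ∑ y ∈ O, F N y = (c:ℤ) * ((n:ℤ) * ∑ y ∈ O, sgn (dot n y Λ)) := by
    rw [← h2, h3, h4]; ring
  exact mul_left_cancel₀ (by exact_mod_cast hcpos.ne') h5

lemma sum_orbits (f : (Fin n → ZMod 2) → ℤ) :
    ∑ O ∈ orbits n, ∑ y ∈ O, f y = ∑ y, f y := by
  classical
  have huniv : (Finset.univ : Finset (Fin n → ZMod 2)) = (orbits n).biUnion id := by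
    ext y
    simp only [Finset.mem_univ, true_iff, Finset.mem_biUnion, id]
    exact ⟨orbit n y, Finset.mem_image.2 ⟨y, Finset.mem_univ y, rfl⟩, mem_orbit_self N y⟩
  have hdisj : Set.PairwiseDisjoint ((orbits n : Finset _) : Set (Finset (Fin n → ZMod 2))) id := by
    intro O1 h1 O2 h2 hne
    rw [Finset.mem_coe] at h1 h2
    rw [Function.onFun, id, id, Finset.disjoint_left]
    intro z hz1 hz2
    apply hne
    obtain ⟨x1, -, rfl⟩ := Finset.mem_image.1 h1
    obtain ⟨x2, -, rfl⟩ := Finset.mem_image.1 h2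
    rw [← orbit_eq_of_mem N hz1, ← orbit_eq_of_mem N hz2]
  rw [huniv, Finset.sum_biUnion hdisj]
  rfl

lemma trace_eq : (n : ℤ) * Matrix.trace (rsbfMatrix n) = ∑ y, F N y := by
  rw [Matrix.trace]
  have : ∑ i : {O // O ∈ orbits n}, Matrix.diag (rsbfMatrix n) i
      = ∑ O ∈ orbits n, ∑ x ∈ O, sgn (dot n x (lam n O)) := by
    rw [← Finset.sum_coe_sort (orbits n) (fun O => ∑ x ∈ O, sgn (dot n x (lam n O)))]
    rfl
  rw [this, Finset.mul_sum,
    Finset.sum_congr rfl (fun O hO => (per_orbit N O hO).symm), sum_orbits]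
end B

noncomputable def Tm (m : ℕ) [NeZero m] : ℤ :=
  ∑ w : ZMod m → ZMod 2, sgn (∑ j : ZMod m, w (j + 1) * w j)

lemma zmod2_self_add (x : ZMod 2) : x + x = 0 := by revert x; decide

lemma sum_shift_index {m : ℕ} [NeZero m] (f : ZMod m → ZMod 2) :
    ∑ j : ZMod m, f (j + 1) = ∑ j : ZMod m, f j :=
  Fintype.sum_equiv (Equiv.addRight (1 : ZMod m)) _ _ (fun _ => rfl)

lemma Tm_odd (m : ℕ) [NeZero m] (hm : Odd m) : Tm m = 0 := by
  set c : ZMod m → ZMod 2 := (fun _ => 1) with hc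
  have key : Tm m = -Tm m := by
    nth_rewrite 1 [Tm]
    rw [Fintype.sum_equiv (Equiv.addRight c)
      _ (fun w => -sgn (∑ j : ZMod m, w (j + 1) * w j)) ?_, Finset.sum_neg_distrib, Tm]
    intro w
    have hcard : ∑ _j : ZMod m, (1 : ZMod 2) = (m : ZMod 2) := by
      rw [Finset.sum_const, Finset.card_univ, ZMod.card, nsmul_eq_mul, mul_one]
    have hmm : (m : ZMod 2) = 1 := by
      rw [← ZMod.natCast_mod, Nat.odd_iff.1 hm]; rfl
    have h1 : ∀ j ∈ (Finset.univ : Finset (ZMod m)), (w + c) (j + 1) * (w + c) j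
        = w (j + 1) * w j + (w (j + 1) + w j + 1) := by
      intro j _
      show (w (j+1) + 1) * (w j + 1) = _
      ring
    have h2 : ∑ j : ZMod m, (w (j + 1) + w j + 1) = 1 := by
      rw [Finset.sum_add_distrib, Finset.sum_add_distrib, sum_shift_index w,
        zmod2_self_add, zero_add, hcard, hmm]
    have hexp : ∑ j : ZMod m, (w + c) (j + 1) * (w + c) j
        = (∑ j : ZMod m, w (j + 1) * w j) + 1 := by
      rw [Finset.sum_congr rfl h1, Finset.sum_add_distrib, h2]
    show sgn (∑ j : ZMod m, w (j + 1) * w j)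
        = -sgn (∑ j : ZMod m, (w + c) (j + 1) * (w + c) j)
    rw [hexp, sgn_add]
    have hs1 : sgn 1 = -1 := rfl
    rw [hs1]; ring
  omega

lemma zmod2_cases (ε : ZMod 2) : ε = 0 ∨ ε = 1 := by revert ε; decide

lemma one_add_sgn (c : ZMod 2) : 1 + sgn c = if c = 0 then 2 else 0 := by
  revert c; decide

lemma Tm_even (t : ℕ) [NeZero t] : Tm (2 * t) = 2 ^ (t + 1) := by
  have ht : 0 < t := NeZero.pos t
  -- the index bijection
  have hinj : Function.Injective (fun p : ZMod t × ZMod 2 => ((2 * p.1.val + p.2.val : ℕ) : ZMod (2 * t))) := by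
    rintro ⟨j, ε⟩ ⟨j', ε'⟩ h
    simp only at h
    have hb1 : 2 * j.val + ε.val < 2 * t := by
      have := ZMod.val_lt j; have := ZMod.val_lt ε; omega
    have hb2 : 2 * j'.val + ε'.val < 2 * t := by
      have := ZMod.val_lt j'; have := ZMod.val_lt ε'; omega
    have := ZMod.val_cast_of_lt hb1
    have := ZMod.val_cast_of_lt hb2
    have heq : 2 * j.val + ε.val = 2 * j'.val + ε'.val := by
      rw [← ZMod.val_cast_of_lt hb1, ← ZMod.val_cast_of_lt hb2, h]
    have hε : ε.val = ε'.val := by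
      have := ZMod.val_lt ε; have := ZMod.val_lt ε'; omega
    have hj : j.val = j'.val := by omega
    exact Prod.ext (ZMod.val_injective _ hj) (ZMod.val_injective _ hε)
  have hbij : Function.Bijective (fun p : ZMod t × ZMod 2 => ((2 * p.1.val + p.2.val : ℕ) : ZMod (2 * t))) := by
    rw [Fintype.bijective_iff_injective_and_card]
    refine ⟨hinj, ?_⟩
    simp [ZMod.card, Fintype.card_prod, Nat.mul_comm]
  set β := Equiv.ofBijective _ hbij with hβ
  have hβ0 : ∀ j : ZMod t, β (j, 0) = ((2 * j.val : ℕ) : ZMod (2 * t)) := by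
    intro j
    show ((2 * j.val + (0 : ZMod 2).val : ℕ) : ZMod (2 * t)) = _
    rw [ZMod.val_zero, Nat.add_zero]
  have hβ1 : ∀ j : ZMod t, β (j, 1) = ((2 * j.val + 1 : ℕ) : ZMod (2 * t)) := by
    intro j
    show ((2 * j.val + (1 : ZMod 2).val : ℕ) : ZMod (2 * t)) = _
    rw [ZMod.val_one]
  have f1 : ∀ j : ZMod t, β (j, 0) + 1 = β (j, 1) := by
    intro j; rw [hβ0, hβ1]; push_cast; ring
  have f2 : ∀ j : ZMod t, β (j, 1) + 1 = β (j + 1, 0) := by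
    intro j
    rw [hβ1, hβ0]
    have hmod : (2 * j.val + 1 + 1) ≡ 2 * (j + 1).val [MOD 2 * t] := by
      have h1 : ((j.val + 1 : ℕ) : ZMod t) = (((j+1).val : ℕ) : ZMod t) := by
        rw [ZMod.natCast_rightInverse (j+1)]
        push_cast
        rw [ZMod.natCast_rightInverse j]
      have h2 : (j.val + 1) ≡ (j + 1).val [MOD t] := (ZMod.natCast_eq_natCast_iff _ _ _).1 h1
      have h3 := Nat.ModEq.mul_left' (c := 2) h2
      calc 2 * j.val + 1 + 1 = 2 * (j.val + 1) := by ring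
      _ ≡ 2 * (j+1).val [MOD 2*t] := h3
    have := (ZMod.natCast_eq_natCast_iff _ _ _).2 hmod
    push_cast at this ⊢
    linear_combination this
  -- expand the cyclic sum over the product index
  have sum_zmod2 : ∀ (M : Type) [AddCommMonoid M] (f : ZMod 2 → M), ∑ ε : ZMod 2, f ε = f 0 + f 1 := by
    intro M _ f
    have huniv2 : (Finset.univ : Finset (ZMod 2)) = {0, 1} := by decide
    rw [huniv2, Finset.sum_insert (by decide), Finset.sum_singleton]
  have hC : ∀ w : ZMod (2*t) → ZMod 2, (∑ i : ZMod (2*t), w (i + 1) * w i)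
      = ∑ j : ZMod t, w (β (j, 1)) * (w (β (j, 0)) + w (β (j + 1, 0))) := by
    intro w
    rw [← Fintype.sum_equiv β (fun p => w (β p + 1) * w (β p)) (fun i => w (i+1) * w i)
      (fun p => rfl)]
    rw [Fintype.sum_prod_type]
    apply Finset.sum_congr rfl
    intro j _
    rw [sum_zmod2 (ZMod 2) (fun ε => w (β (j, ε) + 1) * w (β (j, ε)))]
    rw [f1, f2]
    ring
  -- transfer the sum over w to a sum over pairs (a, b)
  have hne10 : (1 : ZMod 2) ≠ 0 := by decide
  let Φ : ((ZMod t → ZMod 2) × (ZMod t → ZMod 2)) ≃ (ZMod (2*t) → ZMod 2) :=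
    { toFun := fun ab i => if (β.symm i).2 = 0 then ab.1 (β.symm i).1 else ab.2 (β.symm i).1
      invFun := fun w => (fun j => w (β (j, 0)), fun j => w (β (j, 1)))
      left_inv := by
        rintro ⟨a, b⟩
        refine Prod.ext (funext fun j => ?_) (funext fun j => ?_) <;>
          simp only [Equiv.symm_apply_apply] <;> simp [hne10]
      right_inv := by
        intro w
        funext i
        show (if (β.symm i).2 = 0 then w (β ((β.symm i).1, 0)) else w (β ((β.symm i).1, 1))) = w i
        rcases zmod2_cases (β.symm i).2 with h | h
        · rw [if_pos h]
          have h2 : ((β.symm i).1, (0 : ZMod 2)) = β.symm i := Prod.ext rfl h.symm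
          rw [h2, Equiv.apply_symm_apply]
        · rw [if_neg (by rw [h]; exact hne10)]
          have h2 : ((β.symm i).1, (1 : ZMod 2)) = β.symm i := Prod.ext rfl h.symm
          rw [h2, Equiv.apply_symm_apply] }
  have hΦ0 : ∀ ab j, (Φ ab) (β (j, 0)) = ab.1 j := by
    intro ab j
    show (if (β.symm (β (j,0))).2 = 0 then _ else _) = _
    simp [hne10]
  have hΦ1 : ∀ ab j, (Φ ab) (β (j, 1)) = ab.2 j := by
    intro ab j
    show (if (β.symm (β (j,1))).2 = 0 then _ else _) = _
    simp [hne10]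
  have step1 : Tm (2*t) = ∑ ab : (ZMod t → ZMod 2) × (ZMod t → ZMod 2),
      ∏ j : ZMod t, sgn (ab.2 j * (ab.1 j + ab.1 (j + 1))) := by
    rw [Tm]
    rw [← Fintype.sum_equiv Φ
      (fun ab => ∏ j : ZMod t, sgn (ab.2 j * (ab.1 j + ab.1 (j + 1))))
      (fun w => sgn (∑ i : ZMod (2*t), w (i + 1) * w i)) ?_]
    intro ab
    show (∏ j : ZMod t, sgn (ab.2 j * (ab.1 j + ab.1 (j + 1))))
        = sgn (∑ i : ZMod (2*t), (Φ ab) (i + 1) * (Φ ab) i)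
    rw [hC (Φ ab), sgn_sum]
    apply Finset.prod_congr rfl
    intro j _
    rw [hΦ0, hΦ1, hΦ0]
  rw [step1, Fintype.sum_prod_type]
  -- inner sum over b
  have hinner : ∀ a : ZMod t → ZMod 2,
      (∑ b : ZMod t → ZMod 2, ∏ j : ZMod t, sgn (b j * (a j + a (j + 1))))
      = ∏ j : ZMod t, (if a j + a (j + 1) = 0 then (2:ℤ) else 0) := by
    intro a
    have := Finset.prod_univ_sum (fun _ : ZMod t => (Finset.univ : Finset (ZMod 2)))
      (fun j x => sgn (x * (a j + a (j + 1))))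
    rw [Fintype.piFinset_univ] at this
    rw [← this]
    apply Finset.prod_congr rfl
    intro j _
    rw [sum_zmod2 ℤ (fun x => sgn (x * (a j + a (j+1)))), zero_mul, one_mul]
    have : sgn 0 = 1 := rfl
    rw [this, one_add_sgn]
  rw [Finset.sum_congr rfl (fun a _ => hinner a)]
  -- evaluate the product
  have hprod : ∀ a : ZMod t → ZMod 2,
      (∏ j : ZMod t, (if a j + a (j + 1) = 0 then (2:ℤ) else 0))
      = if (∀ j, a (j + 1) = a j) then 2^t else 0 := by
    intro a
    have hiff : ∀ x y : ZMod 2, (x + y = 0) ↔ y = x := by decide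
    by_cases hA : ∀ j, a (j + 1) = a j
    · rw [if_pos hA]
      have : ∀ j ∈ (Finset.univ : Finset (ZMod t)),
          (if a j + a (j + 1) = 0 then (2:ℤ) else 0) = 2 := by
        intro j _; rw [if_pos ((hiff _ _).2 (hA j))]
      rw [Finset.prod_congr rfl this, Finset.prod_const, Finset.card_univ, ZMod.card]
    · rw [if_neg hA]
      push_neg at hA
      obtain ⟨j0, hj0⟩ := hA
      exact Finset.prod_eq_zero (Finset.mem_univ j0)
        (by rw [if_neg (fun h => hj0 ((hiff _ _).1 h))])
  rw [Finset.sum_congr rfl (fun a _ => hprod a)]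
  -- count the constant functions
  have const_char : ∀ a : ZMod t → ZMod 2, (∀ j, a (j + 1) = a j) ↔ a = fun _ => a 0 := by
    intro a
    constructor
    · intro hA
      funext j
      obtain ⟨J, rfl⟩ := (ZMod.natCast_rightInverse (n := t)).surjective j
      induction J with
      | zero => norm_num
      | succ J ih =>
          have : ((J + 1 : ℕ) : ZMod t) = ((J : ℕ) : ZMod t) + 1 := by push_cast; ring
          rw [this, hA, ih]
    · intro h j; rw [h]
  classical
  have hfilter : Finset.univ.filter (fun a : ZMod t → ZMod 2 => ∀ j, a (j + 1) = a j)
      = {(fun _ => 0 : ZMod t → ZMod 2), (fun _ => 1)} := by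
    ext a
    simp only [Finset.mem_filter, Finset.mem_univ, true_and, Finset.mem_insert,
      Finset.mem_singleton]
    constructor
    · intro hA
      rcases zmod2_cases (a 0) with h0 | h0
      · left; rw [(const_char a).1 hA, h0]
      · right; rw [(const_char a).1 hA, h0]
    · rintro (rfl | rfl) j <;> rfl
  rw [Finset.sum_ite, Finset.sum_const_zero, add_zero, Finset.sum_const, hfilter]
  have hcard2 : (({(fun _ => 0), (fun _ => 1)} : Finset (ZMod t → ZMod 2))).card = 2 := by
    rw [Finset.card_insert_of_notMem, Finset.card_singleton]
    rw [Finset.mem_singleton]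
    intro h
    have := congrFun h (0 : ZMod t)
    exact absurd this (by decide)
  rw [hcard2, nsmul_eq_mul]
  ring

lemma Tm_even' (m : ℕ) [NeZero m] (hm : Even m) : Tm m = 2 ^ (m / 2 + 1) := by
  obtain ⟨u, hu⟩ := hm
  have h2 : m = 2 * u := by omega
  subst h2
  haveI : NeZero u := ⟨by have := NeZero.pos (2 * u); omega⟩
  rw [Tm_even]
  congr 1
  omega

lemma S_final (n g m : ℕ) (hg0 : 0 < g) (hmg : m * g = n) [NeZero m] :
    (Tm m) ^ g = if Even m then (2:ℤ) ^ (n / 2 + g) else 0 := by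
  rcases Nat.even_or_odd m with hme | hmo
  · rw [if_pos hme, Tm_even' m hme, ← pow_mul]
    congr 1
    obtain ⟨u, hu⟩ := hme
    have h2 : m = 2 * u := by omega
    have h3 : n = 2 * (u * g) := by rw [← hmg, h2]; ring
    have h4 : m / 2 = u := by omega
    rw [h4]
    have h5 : (u + 1) * g = u * g + g := by ring
    rw [h5]
    omega
  · rw [if_neg (by simpa using hmo), Tm_odd m hmo, zero_pow hg0.ne']

theorem S_eq (n : ℕ) [NeZero n] (K : ℕ) :
    (∑ y : ZMod n → ZMod 2, sgn (∑ i : ZMod n, y (i + (K : ZMod n)) * y i))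
    = if Even (n / n.gcd K) then 2 ^ (n / 2 + n.gcd K) else 0 := by
  have hn0 : 0 < n := NeZero.pos n
  set g := n.gcd K with hgdef
  set m := n / g with hmdef
  have hg0 : 0 < g := Nat.gcd_pos_of_pos_left K hn0
  have hgdvdn : g ∣ n := Nat.gcd_dvd_left n K
  have hgdvdK : g ∣ K := Nat.gcd_dvd_right n K
  have hm0 : 0 < m := Nat.div_pos (Nat.le_of_dvd hn0 hgdvdn) hg0
  haveI : NeZero m := ⟨hm0.ne'⟩
  have hmg : m * g = n := Nat.div_mul_cancel hgdvdn
  have hKg : g * (K / g) = K := Nat.mul_div_cancel' hgdvdK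
  have hcop : Nat.Coprime m (K / g) := Nat.coprime_div_gcd_div_gcd hg0
  have hnmK : n ∣ m * K := by
    refine ⟨K / g, ?_⟩
    conv_lhs => rw [← hKg]
    rw [← hmg]; ring
  set ι : Fin g × ZMod m → ZMod n :=
    (fun p => ((p.1.val + p.2.val * K : ℕ) : ZMod n)) with hιdef
  have hval_lt : ∀ j : ZMod m, j.val < m := fun j => ZMod.val_lt j
  have key_inj : ∀ a b : ℕ, a ≤ b → a < m → b < m → a * K ≡ b * K [MOD n] → a = b := by
    intro a b hab ham hbm hmod
    have h1 : n ∣ b * K - a * K :=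
      (Nat.modEq_iff_dvd' (Nat.mul_le_mul_right K hab)).1 hmod
    rw [← Nat.sub_mul] at h1
    have h2 : (b - a) * K = ((b - a) * (K / g)) * g := by
      conv_lhs => rw [← hKg]
      ring
    have h3 : m * g ∣ ((b - a) * (K / g)) * g := by rw [hmg, ← h2]; exact h1
    have h4 : m ∣ (b - a) * (K / g) := (Nat.mul_dvd_mul_iff_right hg0).1 h3
    have h5 : m ∣ b - a := hcop.dvd_of_dvd_mul_right h4
    have h7 := Nat.eq_zero_of_dvd_of_lt h5 (by omega)
    omega
  have hinj : Function.Injective ι := by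
    rintro ⟨r, j⟩ ⟨r', j'⟩ h
    simp only [hιdef] at h
    have hmodn : (r.val + j.val * K) ≡ (r'.val + j'.val * K) [MOD n] :=
      (ZMod.natCast_eq_natCast_iff _ _ _).1 h
    have hKg0 : K ≡ 0 [MOD g] := (Nat.modEq_zero_iff_dvd).2 hgdvdK
    have hmodg : (r.val + j.val * K) ≡ (r'.val + j'.val * K) [MOD g] :=
      Nat.ModEq.of_dvd hgdvdn hmodn
    have hr1 : (r.val + j.val * K) ≡ (r.val + j.val * 0) [MOD g] :=
      Nat.ModEq.add_left _ (Nat.ModEq.mul_left _ hKg0)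
    have hr2 : (r'.val + j'.val * K) ≡ (r'.val + j'.val * 0) [MOD g] :=
      Nat.ModEq.add_left _ (Nat.ModEq.mul_left _ hKg0)
    have hrr' : r.val ≡ r'.val [MOD g] := by
      have := (hr1.symm.trans hmodg).trans hr2
      simpa using this
    have hr : r = r' := by
      apply Fin.ext
      have h := hrr'
      unfold Nat.ModEq at h
      rwa [Nat.mod_eq_of_lt r.isLt, Nat.mod_eq_of_lt r'.isLt] at h
    subst hr
    have hjj : j.val * K ≡ j'.val * K [MOD n] := Nat.ModEq.add_left_cancel' _ hmodn
    have hv : j.val = j'.val := by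
      rcases Nat.le_total j.val j'.val with hle | hle
      · exact key_inj _ _ hle (hval_lt j) (hval_lt j') hjj
      · exact (key_inj _ _ hle (hval_lt j') (hval_lt j) hjj.symm).symm
    exact Prod.ext rfl (ZMod.val_injective _ hv)
  have hbij : Function.Bijective ι := by
    rw [Fintype.bijective_iff_injective_and_card]
    refine ⟨hinj, ?_⟩
    rw [Fintype.card_prod, Fintype.card_fin, ZMod.card, ZMod.card, Nat.mul_comm, hmg]
  set e := Equiv.ofBijective ι hbij with hedef
  have P1 : ∀ (r : Fin g) (j : ZMod m), e (r, j) + (K : ZMod n) = e (r, j + 1) := by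
    intro r j
    show ((r.val + j.val * K : ℕ) : ZMod n) + (K : ZMod n)
      = ((r.val + (j + 1).val * K : ℕ) : ZMod n)
    have hjv : (j.val + 1) ≡ (j + 1).val [MOD m] := by
      have h1 : ((j.val + 1 : ℕ) : ZMod m) = (((j + 1).val : ℕ) : ZMod m) := by
        rw [ZMod.natCast_rightInverse (j + 1)]
        push_cast
        rw [ZMod.natCast_rightInverse j]
      exact (ZMod.natCast_eq_natCast_iff _ _ _).1 h1
    have h2 : (j.val + 1) * K ≡ (j + 1).val * K [MOD m * K] := Nat.ModEq.mul_right' (c := K) hjv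
    have h3 : (j.val + 1) * K ≡ (j + 1).val * K [MOD n] := Nat.ModEq.of_dvd hnmK h2
    have h4 : (r.val + (j.val + 1) * K) ≡ (r.val + (j + 1).val * K) [MOD n] :=
      Nat.ModEq.add_left _ h3
    have h5 := (ZMod.natCast_eq_natCast_iff _ _ _).2 h4
    push_cast at h5 ⊢
    linear_combination h5
  have hsum_per_y : ∀ y : ZMod n → ZMod 2,
      (∑ i : ZMod n, y (i + (K : ZMod n)) * y i)
      = ∑ r : Fin g, ∑ j : ZMod m, y (e (r, j + 1)) * y (e (r, j)) := by
    intro y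
    rw [← Fintype.sum_equiv e (fun p => y (e p + (K : ZMod n)) * y (e p))
      (fun i => y (i + (K : ZMod n)) * y i) (fun p => rfl)]
    rw [Fintype.sum_prod_type]
    exact Finset.sum_congr rfl fun r _ => Finset.sum_congr rfl fun j _ => by rw [P1]
  -- function space transfer
  let Ψ : (Fin g → ZMod m → ZMod 2) ≃ (ZMod n → ZMod 2) :=
    { toFun := fun u i => u (e.symm i).1 (e.symm i).2
      invFun := fun y r j => y (e (r, j))
      left_inv := by
        intro u; funext r j
        show u (e.symm (e (r, j))).1 (e.symm (e (r, j))).2 = u r j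
        rw [Equiv.symm_apply_apply]
      right_inv := by
        intro y; funext i
        show y (e ((e.symm i).1, (e.symm i).2)) = y i
        rw [show ((e.symm i).1, (e.symm i).2) = e.symm i from rfl, Equiv.apply_symm_apply] }
  have hΨ : ∀ u p, Ψ u (e p) = u p.1 p.2 := by
    intro u p
    show u (e.symm (e p)).1 (e.symm (e p)).2 = _
    rw [Equiv.symm_apply_apply]
  have step1 : (∑ y : ZMod n → ZMod 2, sgn (∑ i : ZMod n, y (i + (K : ZMod n)) * y i))
      = ∑ u : Fin g → ZMod m → ZMod 2, ∏ r : Fin g, sgn (∑ j : ZMod m, u r (j + 1) * u r j) := by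
    rw [← Fintype.sum_equiv Ψ
      (fun u => ∏ r : Fin g, sgn (∑ j : ZMod m, u r (j + 1) * u r j))
      (fun y => sgn (∑ i : ZMod n, y (i + (K : ZMod n)) * y i)) ?_]
    intro u
    show _ = sgn (∑ i : ZMod n, (Ψ u) (i + (K : ZMod n)) * (Ψ u) i)
    rw [hsum_per_y (Ψ u), sgn_sum]
    apply Finset.prod_congr rfl
    intro r _
    congr 1
    exact Finset.sum_congr rfl fun j _ => by rw [hΨ u (r, j+1), hΨ u (r, j)]
  have step2 : (∑ u : Fin g → ZMod m → ZMod 2,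
        ∏ r : Fin g, sgn (∑ j : ZMod m, u r (j + 1) * u r j)) = (Tm m) ^ g := by
    have h := Finset.prod_univ_sum (fun _ : Fin g => (Finset.univ : Finset (ZMod m → ZMod 2)))
      (fun _ w => sgn (∑ j : ZMod m, w (j + 1) * w j))
    rw [Fintype.piFinset_univ] at h
    rw [← h, ← Tm, Finset.prod_const, Finset.card_univ, Fintype.card_fin]
  rw [step1, step2]
  exact S_final n g m hg0 hmg

lemma gcd_fiber_card (n d : ℕ) (hn : 0 < n) (hd : d ∣ n) (hd0 : 0 < d) :
    ((Finset.range n).filter (fun k => n.gcd k = d)).card = Nat.totient (n / d) := by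
  rw [Nat.totient]
  apply Finset.card_bij' (fun k _ => k / d) (fun j _ => d * j)
  · intro k hk
    simp only [Finset.mem_filter, Finset.mem_range] at hk ⊢
    obtain ⟨hkn, hg⟩ := hk
    have hdk : d ∣ k := hg ▸ Nat.gcd_dvd_right n k
    constructor
    · rw [Nat.div_lt_iff_lt_mul hd0]
      have := Nat.div_mul_cancel hd
      omega
    · have := Nat.coprime_div_gcd_div_gcd (m := n) (n := k) (hg ▸ hd0)
      rwa [hg] at this
  · intro j hj
    simp only [Finset.mem_filter, Finset.mem_range] at hj ⊢
    obtain ⟨hjlt, hcop⟩ := hj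
    constructor
    · have h1 : d * j < d * (n / d) := (Nat.mul_lt_mul_left hd0).2 hjlt
      have h2 : d * (n / d) = n := Nat.mul_div_cancel' hd
      omega
    · conv_lhs => rw [← Nat.mul_div_cancel' hd]
      rw [Nat.gcd_mul_left]
      rw [Nat.Coprime] at hcop
      rw [hcop, Nat.mul_one]
  · intro k hk
    simp only [Finset.mem_filter, Finset.mem_range] at hk
    have hdk : d ∣ k := hk.2 ▸ Nat.gcd_dvd_right n k
    exact Nat.mul_div_cancel' hdk
  · intro j hj
    exact Nat.mul_div_cancel_left j hd0

lemma sum_gcd (n : ℕ) (hn : 0 < n) (f : ℕ → ℤ) :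
    ∑ k ∈ Finset.range n, f (n.gcd k) = ∑ d ∈ n.divisors, (Nat.totient (n / d) : ℤ) * f d := by
  classical
  rw [Finset.sum_comp f (fun k => n.gcd k)]
  have himg : (Finset.range n).image (fun k => n.gcd k) = n.divisors := by
    ext d
    simp only [Finset.mem_image, Finset.mem_range, Nat.mem_divisors]
    constructor
    · rintro ⟨k, hk, rfl⟩
      exact ⟨Nat.gcd_dvd_left n k, hn.ne'⟩
    · rintro ⟨hdvd, -⟩
      by_cases hdn : d = n
      · exact ⟨0, hn, by rw [Nat.gcd_zero_right, hdn]⟩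
      · refine ⟨d, lt_of_le_of_ne (Nat.le_of_dvd hn hdvd) hdn, ?_⟩
        exact Nat.gcd_eq_right hdvd
  rw [himg]
  apply Finset.sum_congr rfl
  intro d hd
  rw [gcd_fiber_card n d hn (Nat.dvd_of_mem_divisors hd) (Nat.pos_of_mem_divisors hd),
    nsmul_eq_mul]

section Main

theorem trace_key (N : ℕ) :
    ((N : ℤ) + 1) * Matrix.trace (rsbfMatrix (N+1)) =
      ∑ d ∈ (N+1 : ℕ).divisors.filter (fun d => Even ((N+1) / d)),
        (Nat.totient ((N+1) / d) : ℤ) * 2 ^ ((N+1) / 2 + d) := by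
  rw [trace_eq N]
  have hswap : ∑ y, F N y
      = ∑ k : Fin (N+1), ∑ y : Fin (N+1) → ZMod 2,
          sgn (dot (N+1) ((shift (N+1))^[(k : ℕ)] y) y) := by
    unfold F
    rw [Finset.sum_comm]
  rw [hswap]
  have hk : ∀ k : Fin (N+1),
      (∑ y : Fin (N+1) → ZMod 2, sgn (dot (N+1) ((shift (N+1))^[(k : ℕ)] y) y))
      = if Even ((N+1) / (N+1 : ℕ).gcd (k : ℕ))
          then (2:ℤ) ^ ((N+1) / 2 + (N+1 : ℕ).gcd (k : ℕ)) else 0 := by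
    intro k
    have h1 : ∀ y : Fin (N+1) → ZMod 2,
        dot (N+1) ((shift (N+1))^[(k : ℕ)] y) y
        = ∑ i : Fin (N+1), y (i + ((k : ℕ) : Fin (N+1))) * y i := by
      intro y
      unfold dot
      exact Finset.sum_congr rfl fun i _ => by rw [shift_iterate]
    rw [Finset.sum_congr rfl (fun y _ => by rw [h1 y])]
    exact S_eq (N+1) (k : ℕ)
  rw [Finset.sum_congr rfl (fun k _ => hk k)]
  rw [Fin.sum_univ_eq_sum_range
    (fun K => if Even ((N+1) / (N+1 : ℕ).gcd K) then (2:ℤ) ^ ((N+1) / 2 + (N+1 : ℕ).gcd K) else 0)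
    (N+1)]
  rw [sum_gcd (N+1) (Nat.succ_pos N)
    (fun d => if Even ((N+1) / d) then (2:ℤ) ^ ((N+1) / 2 + d) else 0)]
  rw [Finset.sum_filter]
  apply Finset.sum_congr rfl
  intro d _
  rw [mul_ite, mul_zero]

/-- For even `n > 2`, a closed formula for the trace of `ₙ𝒜`; in particular
the trace is positive. -/
theorem trace_rsbfMatrix_even (n : ℕ) (hn : 2 < n) (hne : Even n) :
    (((Matrix.trace (rsbfMatrix n) : ℤ) : ℚ) =
      (1 / n) * 2 ^ (n / 2) *
        ∑ d ∈ n.divisors.filter (fun d => Even (n / d)),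
          (Nat.totient (n / d) : ℚ) * 2 ^ d) ∧
    0 < Matrix.trace (rsbfMatrix n) := by
  obtain ⟨N, rfl⟩ : ∃ N, n = N + 1 := ⟨n - 1, by omega⟩
  have key := trace_key N
  set n := N + 1 with hndef
  have hpos : (0:ℤ) < ∑ d ∈ (n : ℕ).divisors.filter (fun d => Even (n / d)),
      (Nat.totient (n / d) : ℤ) * 2 ^ (n / 2 + d) := by
    apply Finset.sum_pos
    · intro d hd
      rw [Finset.mem_filter] at hd
      have hd0 : 0 < d := Nat.pos_of_mem_divisors hd.1
      have hnd : 0 < n / d :=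
        Nat.div_pos (Nat.le_of_dvd (by omega) (Nat.dvd_of_mem_divisors hd.1)) hd0
      have h1 : 0 < Nat.totient (n / d) := Nat.totient_pos.2 hnd
      have h2 : (0:ℤ) < 2 ^ (n / 2 + d) := by positivity
      exact mul_pos (by exact_mod_cast h1) h2
    · refine ⟨n / 2, ?_⟩
      rw [Finset.mem_filter, Nat.mem_divisors]
      obtain ⟨t, ht⟩ := hne
      have ht2 : n = 2 * t := by omega
      have h2 : n / 2 = t := by omega
      refine ⟨⟨⟨2, by omega⟩, by omega⟩, ?_⟩
      have ht0 : 0 < t := by omega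
      have hq : n / t = 2 := Nat.div_eq_of_eq_mul_left ht0 (by omega)
      rw [h2, hq]
      decide
  have htr : 0 < Matrix.trace (rsbfMatrix n) := by
    have h : (0:ℤ) < ((N:ℤ) + 1) * Matrix.trace (rsbfMatrix n) := by rw [key]; exact hpos
    rcases mul_pos_iff.1 h with ⟨-, h2⟩ | ⟨h1, -⟩
    · exact h2
    · exfalso
      have hN : (0:ℤ) ≤ (N:ℤ) := Int.natCast_nonneg N
      omega
  refine ⟨?_, htr⟩
  have keyQ : ((n : ℕ) : ℚ) * ((Matrix.trace (rsbfMatrix n) : ℤ) : ℚ)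
      = ∑ d ∈ (n : ℕ).divisors.filter (fun d => Even (n / d)),
          (Nat.totient (n / d) : ℚ) * 2 ^ (n / 2 + d) := by
    exact_mod_cast key
  have hsplit : ∑ d ∈ (n : ℕ).divisors.filter (fun d => Even (n / d)),
      (Nat.totient (n / d) : ℚ) * 2 ^ (n / 2 + d)
      = 2 ^ (n / 2) * ∑ d ∈ (n : ℕ).divisors.filter (fun d => Even (n / d)),
          (Nat.totient (n / d) : ℚ) * 2 ^ d := by
    rw [Finset.mul_sum]
    apply Finset.sum_congr rfl
    intro d _
    rw [pow_add]
    ring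
  have hn0 : ((n : ℕ) : ℚ) ≠ 0 := Nat.cast_ne_zero.2 (by omega)
  rw [hsplit] at keyQ
  rw [div_mul_eq_mul_div, one_mul, div_mul_eq_mul_div, eq_div_iff hn0]
  rw [mul_comm] at keyQ
  rw [← keyQ]

end Main
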